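/- For t ∈ ℝ \ ℤ_{≥0} and λ > 0, the t-deformed cumulant transform of the t-deformed Laguerre series L_λ^{(t)}(z) := 1 + Σ_{k≥1} (−1)^k ((λt)_k (t)_k / (t^k k!)) z^k satisfies C^t[L_λ^{(t)}](z) = λz/(1−z) as formal power series; equivalently, κ_n^t(L_λ^{(t)}) = λ for all n ≥ 1. Consequently, for all λ_1, λ_2 > 0 one has L_{λ_1}^{(t)} ⊞^t L_{λ_2}^{(t)} = L_{λ_1+λ_2}^{(t)}. -/

import Mathlib

open PowerSeries Finset

/-- Falling factorial `(t)_k = t (t-1) ⋯ (t-k+1)`. -/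
noncomputable def ffall (t : ℝ) (k : ℕ) : ℝ := ∏ i ∈ Finset.range k, (t - i)

/-- The `t`-deformed convolution of formal power series. -/
noncomputable def tconv (t : ℝ) (A B : PowerSeries ℝ) : PowerSeries ℝ :=
  PowerSeries.mk fun k => ∑ p ∈ Finset.HasAntidiagonal.antidiagonal k,
    ffall t k / (ffall t p.1 * ffall t p.2)
      * (PowerSeries.coeff p.1 A) * (PowerSeries.coeff p.2 B)

/-- Formal logarithm of a power series (with constant term 1):
`log A = - Σ_{k ≥ 1} (1 - A)^k / k`. -/
noncomputable def flog (A : PowerSeries ℝ) : PowerSeries ℝ :=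
  PowerSeries.mk fun n =>
    -∑ k ∈ Finset.range (n + 1), (PowerSeries.coeff (R := ℝ) n ((1 - A) ^ k)) / k

/-- Power sums of `A ∈ 1 + zℝ⟦z⟧`, defined by `Σ p_k(A) z^k = -z (d/dz) log A(z)`. -/
noncomputable def powSum (A : PowerSeries ℝ) (k : ℕ) : ℝ :=
  -(k : ℝ) * PowerSeries.coeff k (flog A)

/-- `E^t[A](z) = Σ_k (t^k/(t)_k) a_k z^k`. -/
noncomputable def Et (t : ℝ) (A : PowerSeries ℝ) : PowerSeries ℝ :=
  PowerSeries.mk fun k => t ^ k / ffall t k * PowerSeries.coeff k A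

/-- The `t`-deformed cumulant transform `C^t[A](z) = -(z/t)(d/dz) log(E^t[A](z))`. -/
noncomputable def Ct (t : ℝ) (A : PowerSeries ℝ) : PowerSeries ℝ :=
  PowerSeries.mk fun n => -(1 / t) * ((n : ℝ) * PowerSeries.coeff n (flog (Et t A)))

/-- The `i`-th `t`-deformed cumulant of `A`. -/
noncomputable def kappa (t : ℝ) (A : PowerSeries ℝ) (i : ℕ) : ℝ :=
  PowerSeries.coeff i (Ct t A)

/-- The `t`-deformed Laguerre series
`L_λ^{(t)}(z) = 1 + Σ_{k≥1} (-1)^k ((λt)_k (t)_k / (t^k k!)) z^k`. -/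
noncomputable def Lt (t lam : ℝ) : PowerSeries ℝ :=
  PowerSeries.mk fun k =>
    (-1) ^ k * (ffall (lam * t) k * ffall t k) / (t ^ k * (k.factorial : ℝ))

/-! ### Auxiliary lemmas -/

lemma ffall_succ (x : ℝ) (k : ℕ) : ffall x (k+1) = ffall x k * (x - k) := by
  simp [ffall, Finset.prod_range_succ]

lemma ffall_ne_zero {t : ℝ} (ht : ∀ n : ℕ, t ≠ n) (k : ℕ) : ffall t k ≠ 0 := by
  unfold ffall
  exact Finset.prod_ne_zero_iff.2 fun i _ => sub_ne_zero.2 (ht i)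

/-- Vandermonde identity for falling factorials. -/
lemma vand (x y : ℝ) : ∀ k : ℕ, ∑ i ∈ Finset.range (k+1),
    (k.choose i : ℝ) * (ffall x i * ffall y (k - i)) = ffall (x+y) k := by
  intro k
  induction k with
  | zero => simp [ffall]
  | succ k ih =>
    rw [Finset.sum_range_succ' _ (k+1)]
    have h1 : ∀ i ∈ Finset.range (k+1), ((k+1).choose (i+1) : ℝ) *
        (ffall x (i+1) * ffall y (k+1-(i+1))) =
        (k.choose i : ℝ) * (ffall x (i+1) * ffall y (k-i)) +
        (k.choose (i+1) : ℝ) * (ffall x (i+1) * ffall y (k-i)) := by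
      intro i _
      have e : k + 1 - (i+1) = k - i := by omega
      rw [e, Nat.choose_succ_succ, Nat.cast_add]
      ring
    rw [Finset.sum_congr rfl h1, Finset.sum_add_distrib]
    have h2 : (∑ i ∈ Finset.range (k+1), (k.choose (i+1) : ℝ) *
        (ffall x (i+1) * ffall y (k-i))) + ((k+1).choose 0 : ℝ) *
        (ffall x 0 * ffall y (k+1-0)) =
        ∑ i ∈ Finset.range (k+1), (k.choose i : ℝ) * (ffall x i * ffall y (k+1-i)) := by
      rw [Finset.sum_range_succ (fun i => (k.choose (i+1) : ℝ) *
        (ffall x (i+1) * ffall y (k-i))) k]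
      rw [Finset.sum_range_succ' (fun i => (k.choose i : ℝ) * (ffall x i * ffall y (k+1-i))) k]
      have hcongr : ∀ i ∈ Finset.range k, (k.choose (i+1) : ℝ) *
          (ffall x (i+1) * ffall y (k-i)) =
          (k.choose (i+1) : ℝ) * (ffall x (i+1) * ffall y (k+1-(i+1))) := by
        intro i hi
        have e : k + 1 - (i+1) = k - i := by omega
        rw [e]
      rw [Finset.sum_congr rfl hcongr, Nat.choose_succ_self]
      simp [ffall]
    rw [add_assoc, h2]
    have h3 : ∀ i ∈ Finset.range (k+1),
        (k.choose i : ℝ) * (ffall x (i+1) * ffall y (k-i)) +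
        (k.choose i : ℝ) * (ffall x i * ffall y (k+1-i)) =
        (k.choose i : ℝ) * (ffall x i * ffall y (k-i)) * (x + y - k) := by
      intro i hi
      have hik : i ≤ k := by simp at hi; omega
      have e1 : ffall x (i+1) = ffall x i * (x - i) := ffall_succ x i
      have e2 : ffall y (k+1-i) = ffall y (k-i) * (y - (k-i : ℕ)) := by
        have : k + 1 - i = (k - i) + 1 := by omega
        rw [this, ffall_succ]
      have e3 : ((k - i : ℕ) : ℝ) = (k : ℝ) - i := by
        rw [Nat.cast_sub hik]
      rw [e1, e2, e3]
      ring
    rw [← Finset.sum_add_distrib, Finset.sum_congr rfl h3, ← Finset.sum_mul, ih,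
      ffall_succ]

/-- Truncated version of `flog`. -/
noncomputable def Fser (A : PowerSeries ℝ) (N : ℕ) : PowerSeries ℝ :=
  -∑ k ∈ Finset.range (N+1), (1/(k:ℝ)) • ((1 - A)^k)

lemma coeff_pow_zero {u : PowerSeries ℝ} (hu : constantCoeff u = 0)
    {n k : ℕ} (h : n < k) : PowerSeries.coeff n (u^k) = 0 := by
  have hx : (X : PowerSeries ℝ) ∣ u := X_dvd_iff.2 hu
  have : (X : PowerSeries ℝ)^k ∣ u^k := pow_dvd_pow_of_dvd hx k
  exact (X_pow_dvd_iff.1 this) n h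

lemma coeff_Fser (A : PowerSeries ℝ) (N n : ℕ) :
    PowerSeries.coeff n (Fser A N) =
      -∑ k ∈ Finset.range (N+1), (PowerSeries.coeff (R := ℝ) n ((1 - A) ^ k)) / k := by
  simp only [Fser, map_neg, map_sum, map_smul, smul_eq_mul]
  congr 1
  exact Finset.sum_congr rfl fun k _ => by rw [one_div, inv_mul_eq_div]

lemma coeff_flog_eq {A : PowerSeries ℝ} (hA : constantCoeff A = 1)
    {n N : ℕ} (h : n ≤ N) :
    PowerSeries.coeff n (flog A) = PowerSeries.coeff n (Fser A N) := by
  have hu : constantCoeff (1 - A) = 0 := by simp [hA]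
  rw [coeff_Fser, flog, coeff_mk]
  congr 1
  apply Finset.sum_subset
  · exact Finset.range_subset_range.2 (by omega)
  · intro k _ hk
    have : n < k := by simp at hk ⊢; omega
    rw [coeff_pow_zero hu this, zero_div]

lemma deriv_Fser {A : PowerSeries ℝ} (N : ℕ) :
    d⁄dX ℝ (Fser A N) = (∑ j ∈ Finset.range N, (1-A)^j) * d⁄dX ℝ A := by
  unfold Fser
  rw [map_neg, map_sum]
  have key : ∀ k ∈ Finset.range (N+1), d⁄dX ℝ ((1/(k:ℝ)) • ((1 - A)^k)) =
      -((1/(k:ℝ)) * k) • ((1-A)^(k-1) * d⁄dX ℝ A) := by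
    intro k _
    rw [Derivation.map_smul, Derivation.leibniz_pow]
    have : d⁄dX ℝ (1 - A) = -(d⁄dX ℝ A) := by
      rw [map_sub, Derivation.map_one_eq_zero, zero_sub]
    rw [this]
    simp only [smul_eq_mul, nsmul_eq_mul, PowerSeries.smul_eq_C_mul, mul_neg,
      ← map_natCast (PowerSeries.C (R := ℝ)) k, map_neg]
    simp only [map_mul]
    ring
  rw [Finset.sum_congr rfl key]
  rw [Finset.sum_range_succ' (fun k => -((1/(k:ℝ)) * k) • ((1-A)^(k-1) * d⁄dX ℝ A)) N]
  have h0 : -((1/((0:ℕ):ℝ)) * (0:ℕ)) • ((1-A)^((0:ℕ)-1) * d⁄dX ℝ A) = 0 := by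
    simp
  rw [h0, add_zero]
  simp only [neg_smul, Finset.sum_neg_distrib, neg_neg]
  rw [Finset.sum_mul]
  apply Finset.sum_congr rfl
  intro j _
  have hc : (1/((j+1:ℕ):ℝ)) * ((j+1:ℕ):ℝ) = (1:ℝ) := by
    have : ((j+1:ℕ):ℝ) ≠ 0 := by positivity
    field_simp
  rw [Nat.add_sub_cancel, hc, one_smul]

/-- logarithmic-derivative identity: `A ⬝ (flog A)' = A'`. -/
lemma flog_deriv {A : PowerSeries ℝ} (hA : constantCoeff A = 1) :
    A * d⁄dX ℝ (flog A) = d⁄dX ℝ A := by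
  ext n
  have hu : constantCoeff (1 - A) = 0 := by simp [hA]
  have h1 : PowerSeries.coeff n (A * d⁄dX ℝ (flog A))
      = PowerSeries.coeff n (A * d⁄dX ℝ (Fser A (n+1))) := by
    rw [coeff_mul, coeff_mul]
    apply Finset.sum_congr rfl
    intro p hp
    have hpn : p.1 + p.2 = n := Finset.HasAntidiagonal.mem_antidiagonal.1 hp
    rw [coeff_derivative, coeff_derivative, coeff_flog_eq hA (by omega : p.2+1 ≤ n+1)]
  rw [h1, deriv_Fser]
  have hAS : A * (∑ j ∈ Finset.range (n+1), (1-A)^j) = 1 - (1-A)^(n+1) := by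
    have hg := geom_sum_mul (1-A) (n+1)
    rw [show (1-A) - 1 = -A by ring] at hg
    calc A * (∑ j ∈ Finset.range (n+1), (1-A)^j)
        = -((∑ j ∈ Finset.range (n+1), (1-A)^j) * (-A)) := by ring
      _ = -((1-A)^(n+1) - 1) := by rw [hg]
      _ = 1 - (1-A)^(n+1) := by ring
  rw [← mul_assoc, hAS, sub_mul, one_mul, map_sub]
  have hz : PowerSeries.coeff n ((1-A)^(n+1) * d⁄dX ℝ A) = 0 := by
    rw [coeff_mul]
    apply Finset.sum_eq_zero
    intro p hp
    have hpn : p.1 + p.2 = n := Finset.HasAntidiagonal.mem_antidiagonal.1 hp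
    rw [coeff_pow_zero hu (by omega : p.1 < n+1), zero_mul]
  rw [hz, sub_zero]

/-- `E^t[L_λ^{(t)}]` as a clean series. -/
noncomputable def Gser (t lam : ℝ) : PowerSeries ℝ :=
  PowerSeries.mk fun k => (-1)^k * ffall (lam*t) k / (k.factorial : ℝ)

lemma constG (t lam : ℝ) : constantCoeff (Gser t lam) = 1 := by
  have : constantCoeff (Gser t lam) = PowerSeries.coeff 0 (Gser t lam) := by
    simp
  rw [this]
  simp [Gser, ffall]

lemma Et_Lt {t : ℝ} (ht : ∀ n : ℕ, t ≠ n) (lam : ℝ) : Et t (Lt t lam) = Gser t lam := by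
  ext k
  have hf := ffall_ne_zero ht k
  have ht0 : t ≠ 0 := by simpa using ht 0
  have hfac : (k.factorial : ℝ) ≠ 0 := by positivity
  have htk : t ^ k ≠ 0 := pow_ne_zero _ ht0
  simp only [Et, Lt, Gser, coeff_mk]
  field_simp

lemma ode (t lam : ℝ) :
    (1 - PowerSeries.X) * d⁄dX ℝ (Gser t lam) =
      PowerSeries.C (-(lam*t)) * Gser t lam := by
  have key : ∀ n : ℕ, ((-1:ℝ)^(n+1) * ffall (lam*t) (n+1) / ((n+1).factorial : ℝ)) * ((n:ℝ)+1)
      = ((n:ℝ) - lam*t) * ((-1:ℝ)^n * ffall (lam*t) n / (n.factorial : ℝ)) := by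
    intro n
    have hfs : (((n+1).factorial : ℕ) : ℝ) = ((n:ℝ)+1) * (n.factorial : ℝ) := by
      rw [Nat.factorial_succ]; push_cast; ring
    have h1 : ((n:ℝ)+1) ≠ 0 := by positivity
    have h2 : (n.factorial : ℝ) ≠ 0 := by positivity
    rw [ffall_succ, hfs]
    field_simp
    ring
  ext n
  rw [sub_mul, one_mul, map_sub, coeff_C_mul]
  cases n with
  | zero =>
    have h0 : PowerSeries.coeff 0 (PowerSeries.X * d⁄dX ℝ (Gser t lam)) = 0 := by
      rw [PowerSeries.coeff_zero_eq_constantCoeff, map_mul, constantCoeff_X, zero_mul]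
    rw [h0, sub_zero, coeff_derivative]
    simp only [Gser, coeff_mk]
    linear_combination key 0
  | succ n =>
    rw [coeff_succ_X_mul, coeff_derivative, coeff_derivative]
    simp only [Gser, coeff_mk]
    have hk := key (n+1)
    push_cast at hk ⊢
    linear_combination hk

lemma coeff_dflog_G {t : ℝ} (lam : ℝ) :
    ∀ n : ℕ, PowerSeries.coeff n (d⁄dX ℝ (flog (Gser t lam))) = -(lam*t) := by
  have hc := constG t lam
  have h1 := flog_deriv hc
  have hG0 : (Gser t lam) ≠ 0 := by
    intro h; rw [h] at hc; simp at hc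
  have h3 : (1 - PowerSeries.X) * d⁄dX ℝ (flog (Gser t lam)) =
      PowerSeries.C (-(lam*t)) := by
    apply mul_left_cancel₀ hG0
    calc Gser t lam * ((1 - PowerSeries.X) * d⁄dX ℝ (flog (Gser t lam)))
        = (1 - PowerSeries.X) * (Gser t lam * d⁄dX ℝ (flog (Gser t lam))) := by ring
      _ = (1 - PowerSeries.X) * d⁄dX ℝ (Gser t lam) := by rw [h1]
      _ = PowerSeries.C (-(lam*t)) * Gser t lam := ode t lam
      _ = Gser t lam * PowerSeries.C (-(lam*t)) := mul_comm _ _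
  intro n
  induction n with
  | zero =>
    have h := congrArg (PowerSeries.coeff 0) h3
    rw [sub_mul, one_mul, map_sub] at h
    have h0 : PowerSeries.coeff 0 (PowerSeries.X * d⁄dX ℝ (flog (Gser t lam))) = 0 := by
      rw [PowerSeries.coeff_zero_eq_constantCoeff, map_mul, constantCoeff_X, zero_mul]
    rw [h0, sub_zero] at h
    simpa using h
  | succ n ih =>
    have h := congrArg (PowerSeries.coeff (n+1)) h3
    rw [sub_mul, one_mul, map_sub, coeff_succ_X_mul, ih, PowerSeries.coeff_C] at h
    simp only [Nat.succ_ne_zero, if_false] at h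
    linarith [h]

lemma n_coeff_flog {t : ℝ} (lam : ℝ) {n : ℕ} (hn : 1 ≤ n) :
    (n:ℝ) * PowerSeries.coeff n (flog (Gser t lam)) = -(lam*t) := by
  obtain ⟨m, rfl⟩ : ∃ m, n = m+1 := ⟨n-1, by omega⟩
  have h := coeff_dflog_G (t := t) lam m
  rw [coeff_derivative] at h
  push_cast
  linear_combination h


/-- `C^t[L_λ^{(t)}](z) = λz/(1-z)`; equivalently `κ_n^t(L_λ^{(t)}) = λ` for all `n ≥ 1`.
Consequently `L_{λ₁}^{(t)} ⊞^t L_{λ₂}^{(t)} = L_{λ₁+λ₂}^{(t)}`. -/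
theorem Ct_Lt (t : ℝ) (ht : ∀ n : ℕ, t ≠ (n : ℝ)) (lam : ℝ) (hlam : 0 < lam) :
    Ct t (Lt t lam) =
      PowerSeries.C lam * (PowerSeries.X * PowerSeries.mk fun _ => (1 : ℝ)) ∧
    (∀ n : ℕ, 1 ≤ n → kappa t (Lt t lam) n = lam) ∧
    ∀ lam₁ lam₂ : ℝ, 0 < lam₁ → 0 < lam₂ →
      tconv t (Lt t lam₁) (Lt t lam₂) = Lt t (lam₁ + lam₂) := by
  have ht0 : t ≠ 0 := by simpa using ht 0
  have part1 : Ct t (Lt t lam) =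
      PowerSeries.C lam * (PowerSeries.X * PowerSeries.mk fun _ => (1 : ℝ)) := by
    ext n
    rw [Ct, coeff_mk, Et_Lt ht lam, coeff_C_mul]
    cases n with
    | zero =>
      have h0 : PowerSeries.coeff 0
          (PowerSeries.X * PowerSeries.mk fun _ => (1:ℝ)) = 0 := by
        rw [PowerSeries.coeff_zero_eq_constantCoeff, map_mul, constantCoeff_X, zero_mul]
      rw [h0, mul_zero]
      simp
    | succ n =>
      rw [coeff_succ_X_mul, coeff_mk, n_coeff_flog lam (by omega : 1 ≤ n+1)]
      field_simp
  refine ⟨part1, ?_, ?_⟩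
  · intro n hn
    rw [kappa, part1, coeff_C_mul]
    obtain ⟨m, rfl⟩ : ∃ m, n = m+1 := ⟨n-1, by omega⟩
    rw [coeff_succ_X_mul, coeff_mk, mul_one]
  · intro lam₁ lam₂ _ _
    ext k
    rw [tconv, coeff_mk]
    have hterm : ∀ p ∈ Finset.HasAntidiagonal.antidiagonal k,
        ffall t k / (ffall t p.1 * ffall t p.2)
          * (PowerSeries.coeff p.1 (Lt t lam₁)) * (PowerSeries.coeff p.2 (Lt t lam₂))
        = (-1)^k * ffall t k / (t^k * (k.factorial : ℝ)) *
            ((k.choose p.1 : ℝ) * (ffall (lam₁*t) p.1 * ffall (lam₂*t) p.2)) := by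
      rintro ⟨i, j⟩ hp
      have hij : i + j = k := Finset.HasAntidiagonal.mem_antidiagonal.1 hp
      subst hij
      simp only [Lt, coeff_mk]
      have hchoose : (((i+j).choose i : ℕ) : ℝ)
          = ((i+j).factorial : ℝ) / ((i.factorial : ℝ) * (j.factorial : ℝ)) := by
        have e : i + j - i = j := by omega
        rw [Nat.cast_choose ℝ (by omega : i ≤ i + j), e]
      have hfi := ffall_ne_zero ht i
      have hfj := ffall_ne_zero ht j
      have h1 : (i.factorial : ℝ) ≠ 0 := by positivity
      have h2 : (j.factorial : ℝ) ≠ 0 := by positivity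
      have h3 : ((i+j).factorial : ℝ) ≠ 0 := by positivity
      rw [hchoose]
      field_simp
      ring
    rw [Finset.sum_congr rfl hterm, ← Finset.mul_sum,
      Finset.Nat.sum_antidiagonal_eq_sum_range_succ_mk]
    have hsum : ∑ i ∈ Finset.range (k+1),
        ((k.choose i : ℝ) * (ffall (lam₁*t) i * ffall (lam₂*t) (k - i)))
        = ffall (lam₁*t + lam₂*t) k := vand (lam₁*t) (lam₂*t) k
    rw [hsum]
    simp only [Lt, coeff_mk]
    rw [show (lam₁ + lam₂) * t = lam₁*t + lam₂*t by ring]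
    ring
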